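/- arXiv:1107.2188 — 4 statements merged into one kernel-verified Lean document; each statement's English description precedes it below -/
import Mathlib

section
/- E[w(M)] = (p/(1-p))·E[w(N)]. Precisely: the Lebesgue integral of w(M) with respect to ℙ equals ENNReal.ofReal (p/(1-p)) times the Lebesgue integral of w(N) with respect to ℙ. -/
open MeasureTheory ENNReal
open scoped Classical

noncomputable section

/-- The number of indices `t < n` with `ω t = true`. -/
def countTrue (ω : ℕ → Bool) (n : ℕ) : ℕ :=
  ((Finset.range n).filter fun t => ω t = true).card

/-- The least `T : ℕ` such that exactly `μ` of `ω 0, …, ω (T-1)` are `true`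
(`∞` if no such `T` exists). -/
def tau (μ : ℕ) (ω : ℕ → Bool) : ℕ∞ :=
  sInf {T : ℕ∞ | ∃ n : ℕ, T = (n : ℕ∞) ∧ countTrue ω n = μ}

/-- `w(M)(ω) = Σ_{t < τ(ω), ω t = true} w t ω`. -/
def wOfM (μ : ℕ) (w : ℕ → (ℕ → Bool) → ℝ≥0∞) (ω : ℕ → Bool) : ℝ≥0∞ :=
  ∑' t : ℕ, if (t : ℕ∞) < tau μ ω ∧ ω t = true then w t ω else 0

/-- `w(N)(ω) = Σ_{t < τ(ω), ω t = false} w t ω`. -/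
def wOfN (μ : ℕ) (w : ℕ → (ℕ → Bool) → ℝ≥0∞) (ω : ℕ → Bool) : ℝ≥0∞ :=
  ∑' t : ℕ, if (t : ℕ∞) < tau μ ω ∧ ω t = false then w t ω else 0

/-- `P` is the law of an i.i.d. sequence of coin flips with head (`true`) probability `p`:
every finite cylinder set has the product Bernoulli probability. -/
def IsBernoulliProduct (p : ℝ) (P : Measure (ℕ → Bool)) : Prop :=
  ∀ (s : Finset ℕ) (b : ℕ → Bool),
    P {ω | ∀ i ∈ s, ω i = b i} =
      ∏ i ∈ s, (if b i then ENNReal.ofReal p else ENNReal.ofReal (1 - p))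

lemma lt_tau_iff (μ t : ℕ) (ω : ℕ → Bool) :
    (t : ℕ∞) < tau μ ω ↔ ∀ n ≤ t, countTrue ω n ≠ μ := by
  constructor
  · intro h n hn hc
    have : tau μ ω ≤ (n : ℕ∞) := sInf_le ⟨n, rfl, hc⟩
    have h2 : (t : ℕ∞) < (n : ℕ∞) := lt_of_lt_of_le h this
    exact absurd (Nat.cast_le.mpr hn) (not_le.mpr h2)
  · intro h
    have : ((t : ℕ∞) + 1) ≤ tau μ ω := by
      apply le_sInf
      rintro T ⟨n, rfl, hc⟩
      have : t < n := by
        by_contra hle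
        exact h n (Nat.le_of_not_lt hle) hc
      exact_mod_cast Nat.succ_le_of_lt this
    have h1 : (t : ℕ∞) < (t : ℕ∞) + 1 := by
      have : (t : ℕ∞) < ((t + 1 : ℕ) : ℕ∞) := by exact_mod_cast Nat.lt_succ_self t
      simpa using this
    exact lt_of_lt_of_le h1 this

lemma countTrue_congr {ω ω' : ℕ → Bool} {n : ℕ} (h : ∀ s < n, ω s = ω' s) :
    countTrue ω n = countTrue ω' n := by
  unfold countTrue
  congr 1
  apply Finset.filter_congr
  intro x hx
  rw [h x (Finset.mem_range.mp hx)]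

lemma measurable_countTrue (n : ℕ) : Measurable (fun ω : ℕ → Bool => countTrue ω n) := by
  simp only [countTrue, Finset.card_filter]
  apply Finset.measurable_sum
  intro i _
  exact Measurable.ite (measurableSet_eq_fun (measurable_pi_apply i) measurable_const)
    measurable_const measurable_const

/-- key independence lemma -/
lemma keyA (p : ℝ) (P : Measure (ℕ → Bool)) (hP : IsBernoulliProduct p P)
    (t : ℕ) (b : Bool) (g : (ℕ → Bool) → ℝ≥0∞)
    (hg : ∀ ω ω', (∀ s < t, ω s = ω' s) → g ω = g ω') :
    ∫⁻ ω, (if ω t = b then g ω else 0) ∂P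
      = (if b then ENNReal.ofReal p else ENNReal.ofReal (1 - p)) * ∫⁻ ω, g ω ∂P := by
  set q : Bool → ℝ≥0∞ := fun c => if c then ENNReal.ofReal p else ENNReal.ofReal (1 - p) with hq
  set ext : (Fin t → Bool) → ℕ → Bool :=
    fun v n => if h : n < t then v ⟨n, h⟩ else false with hext
  set A : (Fin t → Bool) → Set (ℕ → Bool) :=
    fun v => {ω | ∀ i : Fin t, ω (i : ℕ) = v i} with hA
  have hAmeas : ∀ v, MeasurableSet (A v) := by
    intro v
    have : A v = ⋂ i : Fin t, {ω : ℕ → Bool | ω (i : ℕ) = v i} := by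
      ext ω; simp [hA, Set.mem_iInter]
    rw [this]
    exact MeasurableSet.iInter fun i =>
      measurableSet_eq_fun (measurable_pi_apply _) measurable_const
  -- pointwise decomposition of g
  have hgdecomp : ∀ ω, g ω = ∑ v : Fin t → Bool, (A v).indicator (fun _ => g (ext v)) ω := by
    intro ω
    rw [Finset.sum_eq_single (fun i : Fin t => ω (i : ℕ))]
    · have hmem : ω ∈ A (fun i : Fin t => ω (i : ℕ)) := fun i => rfl
      rw [Set.indicator_of_mem hmem]
      exact hg ω _ (fun s hs => by simp [hext, hs])
    · intro v _ hv
      apply Set.indicator_of_notMem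
      intro hmem
      exact hv (funext fun i => (hmem i).symm)
    · intro h; exact absurd (Finset.mem_univ _) h
  -- probability of A v
  set bfun : (Fin t → Bool) → ℕ → Bool :=
    fun v n => if h : n < t then v ⟨n, h⟩ else b with hbfun
  have hPA : ∀ v, P (A v) = ∏ i ∈ Finset.range t, q (bfun v i) := by
    intro v
    have : A v = {ω : ℕ → Bool | ∀ i ∈ Finset.range t, ω i = bfun v i} := by
      ext ω
      constructor
      · intro hω i hi
        have hi' := Finset.mem_range.mp hi
        simpa [hbfun, hi'] using hω ⟨i, hi'⟩
      · intro hω i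
        simpa [hbfun, i.isLt] using hω (i : ℕ) (Finset.mem_range.mpr i.isLt)
    rw [this, hP]
  have hPAb : ∀ v, P (A v ∩ {ω | ω t = b}) = P (A v) * q b := by
    intro v
    have hset : A v ∩ {ω : ℕ → Bool | ω t = b}
        = {ω : ℕ → Bool | ∀ i ∈ Finset.range (t + 1), ω i = bfun v i} := by
      ext ω
      constructor
      · rintro ⟨h1, h2⟩ i hi
        rcases Nat.lt_succ_iff_lt_or_eq.mp (Finset.mem_range.mp hi) with hi' | rfl
        · simpa [hbfun, hi'] using h1 ⟨i, hi'⟩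
        · simpa [hbfun] using h2
      · intro hω
        refine ⟨fun i => ?_, ?_⟩
        · have := hω (i : ℕ) (Finset.mem_range.mpr (Nat.lt_succ_of_lt i.isLt))
          simpa [hbfun, i.isLt] using this
        · have := hω t (Finset.mem_range.mpr (Nat.lt_succ_self t))
          simpa [hbfun] using this
    rw [hset, hP, Finset.prod_range_succ, hPA]
    congr 1
    simp [hbfun, hq]
  -- integrals
  have hleft : (fun ω : ℕ → Bool => if ω t = b then g ω else 0)
      = fun ω => ∑ v : Fin t → Bool, ((A v) ∩ {ω | ω t = b}).indicator
          (fun _ => g (ext v)) ω := by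
    funext ω
    by_cases hb : ω t = b
    · simp only [hb, if_true]
      rw [hgdecomp ω]
      apply Finset.sum_congr rfl
      intro v _
      by_cases hmem : ω ∈ A v
      · rw [Set.indicator_of_mem hmem, Set.indicator_of_mem (Set.mem_inter hmem hb)]
      · rw [Set.indicator_of_notMem hmem, Set.indicator_of_notMem (fun h => hmem h.1)]
    · simp only [hb, if_false]
      symm
      apply Finset.sum_eq_zero
      intro v _
      exact Set.indicator_of_notMem (fun h => hb h.2) _
  have hbset : MeasurableSet {ω : ℕ → Bool | ω t = b} :=
    measurableSet_eq_fun (measurable_pi_apply _) measurable_const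
  calc ∫⁻ ω, (if ω t = b then g ω else 0) ∂P
      = ∑ v : Fin t → Bool, g (ext v) * P ((A v) ∩ {ω | ω t = b}) := by
        rw [hleft, lintegral_finset_sum]
        · refine Finset.sum_congr rfl fun v _ => lintegral_indicator_const
            ((hAmeas v).inter hbset) _
        · exact fun v _ => (measurable_const.indicator ((hAmeas v).inter hbset))
    _ = q b * ∑ v : Fin t → Bool, g (ext v) * P (A v) := by
        rw [Finset.mul_sum]
        refine Finset.sum_congr rfl fun v _ => ?_
        rw [hPAb v]; ring
    _ = q b * ∫⁻ ω, g ω ∂P := by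
        congr 1
        rw [show (fun ω : ℕ → Bool => g ω) = fun ω =>
          ∑ v : Fin t → Bool, (A v).indicator (fun _ => g (ext v)) ω from funext hgdecomp,
          lintegral_finset_sum]
        · exact Finset.sum_congr rfl fun v _ => (lintegral_indicator_const (hAmeas v) _).symm
        · exact fun v _ => measurable_const.indicator (hAmeas v)

theorem expectation_wM_eq_ratio_mul_expectation_wN
    (p : ℝ) (hp0 : 0 < p) (hp1 : p < 1)
    (P : Measure (ℕ → Bool)) [IsProbabilityMeasure P] (hP : IsBernoulliProduct p P)
    (μ : ℕ) (hμ : 1 ≤ μ)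
    (w : ℕ → (ℕ → Bool) → ℝ≥0∞)
    (hmeas : ∀ t, Measurable (w t))
    (hdep : ∀ (t : ℕ) (ω ω' : ℕ → Bool), (∀ s < t, ω s = ω' s) → w t ω = w t ω') :
    ∫⁻ ω, wOfM μ w ω ∂P = ENNReal.ofReal (p / (1 - p)) * ∫⁻ ω, wOfN μ w ω ∂P := by
  set f : ℕ → (ℕ → Bool) → ℝ≥0∞ :=
    fun t ω => if (t : ℕ∞) < tau μ ω then w t ω else 0 with hf
  have hfdep : ∀ (t : ℕ) (ω ω' : ℕ → Bool), (∀ s < t, ω s = ω' s) → f t ω = f t ω' := by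
    intro t ω ω' h
    have hiff : ((t : ℕ∞) < tau μ ω ↔ (t : ℕ∞) < tau μ ω') := by
      rw [lt_tau_iff, lt_tau_iff]
      have hc : ∀ n ≤ t, countTrue ω n = countTrue ω' n := fun n hn =>
        countTrue_congr (fun s hs => h s (lt_of_lt_of_le hs hn))
      constructor
      · intro h2 n hn; rw [← hc n hn]; exact h2 n hn
      · intro h2 n hn; rw [hc n hn]; exact h2 n hn
    simp only [hf]
    by_cases hlt : (t : ℕ∞) < tau μ ω
    · rw [if_pos hlt, if_pos (hiff.mp hlt)]; exact hdep t ω ω' h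
    · rw [if_neg hlt, if_neg (fun h2 => hlt (hiff.mpr h2))]
  have hSmeas : ∀ t : ℕ, MeasurableSet {ω : ℕ → Bool | (t : ℕ∞) < tau μ ω} := by
    intro t
    have : {ω : ℕ → Bool | (t : ℕ∞) < tau μ ω}
        = ⋂ n ∈ Finset.range (t + 1), {ω : ℕ → Bool | countTrue ω n ≠ μ} := by
      ext ω
      simp only [Set.mem_setOf_eq, Set.mem_iInter, Finset.mem_range, Nat.lt_succ_iff,
        lt_tau_iff]
    rw [this]
    exact MeasurableSet.biInter (Finset.range (t + 1)).countable_toSet fun n _ =>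
      (measurable_countTrue n) (measurableSet_singleton μ) |>.compl
  have hfmeas : ∀ t, Measurable (f t) := by
    intro t
    have : f t = Set.indicator {ω : ℕ → Bool | (t : ℕ∞) < tau μ ω} (w t) := by
      funext ω
      by_cases hlt : (t : ℕ∞) < tau μ ω
      · simp [hf, hlt]
      · simp [hf, hlt]
    rw [this]
    exact (hmeas t).indicator (hSmeas t)
  have hMre : ∀ ω, wOfM μ w ω = ∑' t : ℕ, (if ω t = true then f t ω else 0) := by
    intro ω
    refine tsum_congr fun t => ?_
    by_cases hb : ω t = true <;> by_cases hlt : (t : ℕ∞) < tau μ ω <;>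
      simp [wOfM, hf, hb, hlt]
  have hNre : ∀ ω, wOfN μ w ω = ∑' t : ℕ, (if ω t = false then f t ω else 0) := by
    intro ω
    refine tsum_congr fun t => ?_
    by_cases hb : ω t = false <;> by_cases hlt : (t : ℕ∞) < tau μ ω <;>
      simp [wOfN, hf, hb, hlt]
  have hterm_meas : ∀ (b : Bool) (t : ℕ),
      Measurable (fun ω : ℕ → Bool => if ω t = b then f t ω else 0) := by
    intro b t
    exact Measurable.ite (measurableSet_eq_fun (measurable_pi_apply t) measurable_const)
      (hfmeas t) measurable_const
  have hM : ∫⁻ ω, wOfM μ w ω ∂P = ∑' t : ℕ, ENNReal.ofReal p * ∫⁻ ω, f t ω ∂P := by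
    rw [show (fun ω => wOfM μ w ω) = fun ω => ∑' t : ℕ, (if ω t = true then f t ω else 0)
      from funext hMre, lintegral_tsum fun t => (hterm_meas true t).aemeasurable]
    refine tsum_congr fun t => ?_
    have := keyA p P hP t true (f t) (hfdep t)
    simpa using this
  have hN : ∫⁻ ω, wOfN μ w ω ∂P = ∑' t : ℕ, ENNReal.ofReal (1 - p) * ∫⁻ ω, f t ω ∂P := by
    rw [show (fun ω => wOfN μ w ω) = fun ω => ∑' t : ℕ, (if ω t = false then f t ω else 0)
      from funext hNre, lintegral_tsum fun t => (hterm_meas false t).aemeasurable]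
    refine tsum_congr fun t => ?_
    have := keyA p P hP t false (f t) (hfdep t)
    simpa using this
  rw [hM, hN, ← ENNReal.tsum_mul_left]
  refine tsum_congr fun t => ?_
  rw [← mul_assoc, ← ENNReal.ofReal_mul (div_nonneg hp0.le (sub_pos.mpr hp1).le),
    div_mul_cancel₀ p (ne_of_gt (sub_pos.mpr hp1))]

end
end

section
/- In the case μ = 1, if the weight system is decreasing and w(S)(ω) is defined as w(N)(ω) when h_N(ω) ≤ 1 and 0 otherwise, then E[w(N)] ≤ E[w(S)] + ((1−p²)/p²)·E[w(S)], where expectations are Lebesgue integrals with respect to ℙ and the real coefficient (1−p²)/p² is coerced to ℝ≥0∞ via ENNReal.ofReal. -/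
open MeasureTheory ENNReal
open scoped Classical

noncomputable section

/-- `h_N(ω)`: the number of indices `t < τ(ω)` with `ω t = false` (as a value in `ℝ≥0∞`). -/
def hOfN (μ : ℕ) (ω : ℕ → Bool) : ℝ≥0∞ :=
  ∑' t : ℕ, if (t : ℕ∞) < tau μ ω ∧ ω t = false then (1 : ℝ≥0∞) else 0

/-- `w(S)(ω) = w(N)(ω)` if `h_N(ω) ≤ μ`, and `0` otherwise. -/
def wOfS (μ : ℕ) (w : ℕ → (ℕ → Bool) → ℝ≥0∞) (ω : ℕ → Bool) : ℝ≥0∞ :=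
  if hOfN μ ω ≤ (μ : ℝ≥0∞) then wOfN μ w ω else 0

private lemma tau_one_eq {k : ℕ} {ω : ℕ → Bool} (h1 : ∀ i < k, ω i = false)
    (h2 : ω k = true) : tau 1 ω = ((k + 1 : ℕ) : ℕ∞) := by
  have hct0 : ∀ n ≤ k, countTrue ω n = 0 := by
    intro n hn
    simp only [countTrue, Finset.card_eq_zero, Finset.filter_eq_empty_iff]
    intro t ht
    simp only [Finset.mem_range] at ht
    simp [h1 t (lt_of_lt_of_le ht hn)]
  have hct1 : countTrue ω (k + 1) = 1 := by
    have hfe : (Finset.range (k + 1)).filter (fun t => ω t = true) = {k} := by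
      ext t
      simp only [Finset.mem_filter, Finset.mem_range, Finset.mem_singleton]
      constructor
      · rintro ⟨ht, hωt⟩
        by_contra hne
        have htk : t < k := lt_of_le_of_ne (Nat.lt_succ_iff.mp ht) hne
        rw [h1 t htk] at hωt
        exact Bool.false_ne_true hωt
      · rintro rfl
        exact ⟨Nat.lt_succ_self _, h2⟩
    simp [countTrue, hfe]
  apply le_antisymm
  · exact sInf_le ⟨k + 1, rfl, hct1⟩
  · apply le_sInf
    rintro T ⟨n, rfl, hn⟩
    have hkn : k + 1 ≤ n := by
      by_contra hlt
      push_neg at hlt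
      rw [hct0 n (Nat.lt_succ_iff.mp hlt)] at hn
      exact one_ne_zero hn.symm
    exact_mod_cast hkn

private lemma cond_iff {k : ℕ} {ω : ℕ → Bool} (h1 : ∀ i < k, ω i = false)
    (h2 : ω k = true) :
    ∀ t : ℕ, ((t : ℕ∞) < tau 1 ω ∧ ω t = false) ↔ t < k := by
  intro t
  rw [tau_one_eq h1 h2]
  constructor
  · rintro ⟨hlt, hf⟩
    have ht : t < k + 1 := by exact_mod_cast hlt
    rcases Nat.lt_succ_iff_lt_or_eq.mp ht with h | rfl
    · exact h
    · rw [h2] at hf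
      exact absurd hf (by simp)
  · intro ht
    exact ⟨by exact_mod_cast Nat.lt_succ_of_lt ht, h1 t ht⟩

private lemma wOfN_eq {k : ℕ} {ω : ℕ → Bool} (w : ℕ → (ℕ → Bool) → ℝ≥0∞)
    (hdep : ∀ (t : ℕ) (ω ω' : ℕ → Bool), (∀ s < t, ω s = ω' s) → w t ω = w t ω')
    (h1 : ∀ i < k, ω i = false) (h2 : ω k = true) :
    wOfN 1 w ω = ∑ t ∈ Finset.range k, w t (fun _ => false) := by
  have hcond := cond_iff h1 h2
  unfold wOfN
  rw [tsum_eq_sum (s := Finset.range k) ?_]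
  · apply Finset.sum_congr rfl
    intro t ht
    simp only [Finset.mem_range] at ht
    rw [if_pos ((hcond t).mpr ht)]
    exact hdep t ω (fun _ => false) (fun s hs => h1 s (hs.trans ht))
  · intro t ht
    simp only [Finset.mem_range] at ht
    rw [if_neg]
    intro hc
    exact ht ((hcond t).mp hc)

private lemma hOfN_eq {k : ℕ} {ω : ℕ → Bool} (h1 : ∀ i < k, ω i = false)
    (h2 : ω k = true) : hOfN 1 ω = (k : ℝ≥0∞) := by
  have hcond := cond_iff h1 h2
  unfold hOfN
  rw [tsum_eq_sum (s := Finset.range k) ?_]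
  · rw [Finset.sum_congr rfl (fun t ht => if_pos ((hcond t).mpr (Finset.mem_range.mp ht)))]
    simp
  · intro t ht
    simp only [Finset.mem_range] at ht
    rw [if_neg]
    intro hc
    exact ht ((hcond t).mp hc)

theorem expectation_wN_le_expectation_wS_mu_one
    (p : ℝ) (hp0 : 0 < p) (hp1 : p < 1)
    (P : Measure (ℕ → Bool)) [IsProbabilityMeasure P] (hP : IsBernoulliProduct p P)
    (μ : ℕ) (hμ : μ = 1)
    (w : ℕ → (ℕ → Bool) → ℝ≥0∞)
    (hmeas : ∀ t, Measurable (w t))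
    (hdep : ∀ (t : ℕ) (ω ω' : ℕ → Bool), (∀ s < t, ω s = ω' s) → w t ω = w t ω')
    (hdec : ∀ (i j : ℕ) (ω : ℕ → Bool), i ≤ j → w j ω ≤ w i ω) :
    ∫⁻ ω, wOfN μ w ω ∂P ≤
      ∫⁻ ω, wOfS μ w ω ∂P +
        ENNReal.ofReal ((1 - p ^ 2) / p ^ 2) * ∫⁻ ω, wOfS μ w ω ∂P := by
  subst hμ
  set q : ℝ≥0∞ := ENNReal.ofReal (1 - p) with hq
  set Pp : ℝ≥0∞ := ENNReal.ofReal p with hPp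
  set F : ℕ → Bool := fun _ => false with hF
  set a : ℕ → ℝ≥0∞ := fun t => w t F with ha
  set A : ℕ → Set (ℕ → Bool) := fun k => {ω | (∀ i < k, ω i = false) ∧ ω k = true} with hA
  -- measurability of the events
  have hAmeas : ∀ k, MeasurableSet (A k) := by
    intro k
    have hAk : A k = (⋂ i ∈ Set.Iio k, (fun ω : ℕ → Bool => ω i) ⁻¹' {false}) ∩
        ((fun ω : ℕ → Bool => ω k) ⁻¹' {true}) := by
      ext ω
      simp [hA, Set.mem_iInter]
    rw [hAk]
    exact (MeasurableSet.biInter (Set.to_countable _)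
      fun i _ => measurable_pi_apply i (by trivial)).inter
      (measurable_pi_apply k (by trivial))
  -- pairwise disjoint
  have key : ∀ j k, j < k → Disjoint (A j) (A k) := by
    intro j k h
    rw [Set.disjoint_left]
    rintro ω ⟨_, hj2⟩ ⟨hk1, _⟩
    rw [hk1 j h] at hj2
    exact Bool.false_ne_true hj2
  have hdisj : Pairwise (Function.onFun Disjoint A) := by
    intro j k hjk
    rcases hjk.lt_or_gt with h | h
    · exact key j k h
    · exact (key k j h).symm
  -- complement is null
  have hcompl : P ((⋃ k, A k)ᶜ) = 0 := by
    have hsub : (⋃ k, A k)ᶜ ⊆ {ω | ∀ i, ω i = false} := by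
      intro ω hω
      simp only [Set.mem_compl_iff, Set.mem_iUnion, not_exists] at hω
      intro i
      by_contra hi
      rw [Bool.not_eq_false] at hi
      have hex : ∃ j, ω j = true := ⟨i, hi⟩
      apply hω (Nat.find hex)
      exact ⟨fun j hj => by simpa using Nat.find_min hex hj, Nat.find_spec hex⟩
    have hbound : ∀ n : ℕ, P {ω | ∀ i, ω i = false} ≤ q ^ n := by
      intro n
      have hsub2 : {ω : ℕ → Bool | ∀ i, ω i = false} ⊆
          {ω | ∀ i ∈ Finset.range n, ω i = (fun _ => false) i} := fun ω hω i _ => hω i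
      calc P {ω | ∀ i, ω i = false}
          ≤ P {ω | ∀ i ∈ Finset.range n, ω i = (fun _ => false) i} := measure_mono hsub2
        _ = q ^ n := by
            rw [hP (Finset.range n) (fun _ => false)]
            simp [hq]
    have hq_lt : q < 1 := by
      rw [hq]
      exact ENNReal.ofReal_lt_one.mpr (by linarith)
    have htend : Filter.Tendsto (fun n : ℕ => q ^ n) Filter.atTop (nhds 0) :=
      ENNReal.tendsto_pow_atTop_nhds_zero_of_lt_one hq_lt
    have h0 : P {ω | ∀ i, ω i = false} ≤ 0 := ge_of_tendsto' htend hbound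
    exact measure_mono_null hsub (le_antisymm h0 zero_le)
  -- measure of the events
  have hmeasA : ∀ k, P (A k) = Pp * q ^ k := by
    intro k
    have hset : {ω : ℕ → Bool | ∀ i ∈ Finset.range (k + 1), ω i = decide (i = k)} = A k := by
      ext ω
      simp only [hA, Set.mem_setOf_eq, Finset.mem_range]
      constructor
      · intro h
        refine ⟨fun i hi => ?_, ?_⟩
        · rw [h i (Nat.lt_succ_of_lt hi)]
          simp [Nat.ne_of_lt hi]
        · rw [h k (Nat.lt_succ_self k)]
          simp
      · rintro ⟨hf, ht⟩ i hi
        rcases Nat.lt_succ_iff_lt_or_eq.mp hi with h | rfl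
        · rw [hf i h]
          simp [Nat.ne_of_lt h]
        · simp [ht]
    have := hP (Finset.range (k + 1)) (fun i => decide (i = k))
    rw [hset] at this
    rw [this, Finset.prod_range_succ]
    have h1 : ∀ i ∈ Finset.range k,
        (if (decide (i = k) : Bool) then ENNReal.ofReal p else ENNReal.ofReal (1 - p))
          = ENNReal.ofReal (1 - p) := by
      intro i hi
      simp only [Finset.mem_range] at hi
      simp [Nat.ne_of_lt hi]
    rw [Finset.prod_congr rfl h1, Finset.prod_const, Finset.card_range]
    simp [hq, hPp, mul_comm]
  -- decomposition of integrals
  have hdecomp : ∀ f : (ℕ → Bool) → ℝ≥0∞,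
      ∫⁻ ω, f ω ∂P = ∑' k, ∫⁻ ω in A k, f ω ∂P := by
    intro f
    rw [← setLIntegral_univ f, ← setLIntegral_congr (μ := P) (ae_eq_univ.mpr hcompl),
      lintegral_iUnion hAmeas hdisj]
  -- value of wOfN integral on each piece
  have hwNval : ∀ k, ∫⁻ ω in A k, wOfN 1 w ω ∂P
      = (Pp * q ^ k) * ∑ t ∈ Finset.range k, a t := by
    intro k
    rw [setLIntegral_congr_fun (hAmeas k)
      (fun ω hω => wOfN_eq w hdep hω.1 hω.2)]
    rw [setLIntegral_const, hmeasA k, mul_comm]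
  -- value of wOfS integral on each piece
  have hwSval : ∀ k, ∫⁻ ω in A k, wOfS 1 w ω ∂P
      = (Pp * q ^ k) * (if k ≤ 1 then ∑ t ∈ Finset.range k, a t else 0) := by
    intro k
    have hpt : ∀ ω ∈ A k, wOfS 1 w ω = (if k ≤ 1 then ∑ t ∈ Finset.range k, a t else 0) := by
      intro ω hω
      unfold wOfS
      rw [hOfN_eq hω.1 hω.2, wOfN_eq w hdep hω.1 hω.2]
      by_cases hk : k ≤ 1
      · rw [if_pos (by exact_mod_cast hk), if_pos hk]
      · rw [if_neg (by exact_mod_cast hk), if_neg hk]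
    rw [setLIntegral_congr_fun (hAmeas k) hpt]
    rw [setLIntegral_const, hmeasA k, mul_comm]
  -- the wOfS integral
  have hS : ∫⁻ ω, wOfS 1 w ω ∂P = Pp * q * a 0 := by
    rw [hdecomp (wOfS 1 w), tsum_eq_single 1 ?_]
    · rw [hwSval 1]
      simp [Finset.sum_range_one]
    · intro k hk
      rw [hwSval k]
      rcases eq_or_ne k 0 with rfl | h0
      · simp
      · have hk2 : ¬ k ≤ 1 := by omega
        simp [hk2]
  -- sum bound for wOfN
  have hck : ∀ k : ℕ, (∑ t ∈ Finset.range k, a t) ≤ (k : ℝ≥0∞) * a 0 := by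
    intro k
    calc ∑ t ∈ Finset.range k, a t ≤ ∑ _t ∈ Finset.range k, a 0 :=
          Finset.sum_le_sum fun t _ => hdec 0 t F (Nat.zero_le t)
      _ = (k : ℝ≥0∞) * a 0 := by
          rw [Finset.sum_const, Finset.card_range, nsmul_eq_mul]
  -- the geometric series computation
  have hq1 : ‖1 - p‖ < 1 := by
    rw [Real.norm_eq_abs, abs_of_nonneg (by linarith)]
    linarith
  have hsummable : Summable (fun k : ℕ => (k : ℝ) * (1 - p) ^ k) := by
    have := summable_pow_mul_geometric_of_norm_lt_one 1 hq1
    simpa using this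
  have hsum : (∑' k : ℕ, (k : ℝ≥0∞) * q ^ k) = ENNReal.ofReal ((1 - p) / p ^ 2) := by
    have h1 : ∀ k : ℕ, (k : ℝ≥0∞) * q ^ k = ENNReal.ofReal ((k : ℝ) * (1 - p) ^ k) := by
      intro k
      rw [ENNReal.ofReal_mul (p := (k : ℝ)) (by positivity), ENNReal.ofReal_pow (by linarith),
        ENNReal.ofReal_natCast, hq]
    rw [tsum_congr h1, ← ENNReal.ofReal_tsum_of_nonneg (fun k => mul_nonneg (Nat.cast_nonneg k) (pow_nonneg (by linarith) k)) hsummable]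
    congr 1
    rw [tsum_coe_mul_geometric_of_norm_lt_one hq1]
    have h2 : (1 : ℝ) - (1 - p) = p := by ring
    rw [h2]
  -- final computation
  rw [hS, hdecomp (wOfN 1 w)]
  have hRHS : Pp * q * a 0 + ENNReal.ofReal ((1 - p ^ 2) / p ^ 2) * (Pp * q * a 0)
      = ENNReal.ofReal (p * ((1 - p) / p ^ 2)) * a 0 := by
    have hpq : Pp * q = ENNReal.ofReal (p * (1 - p)) := by
      rw [hPp, hq, ENNReal.ofReal_mul hp0.le]
    have h3 : (0:ℝ) ≤ (1 - p ^ 2) / p ^ 2 := div_nonneg (by nlinarith) (by positivity)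
    have h4 : (0:ℝ) ≤ p * (1 - p) := by nlinarith
    have hpne : p ≠ 0 := hp0.ne'
    rw [hpq, ← mul_assoc, ← ENNReal.ofReal_mul h3, ← add_mul,
      ← ENNReal.ofReal_add h4 (mul_nonneg h3 h4)]
    congr 1
    field_simp
    ring
  rw [hRHS]
  calc (∑' k : ℕ, ∫⁻ ω in A k, wOfN 1 w ω ∂P)
      = ∑' k : ℕ, (Pp * q ^ k) * ∑ t ∈ Finset.range k, a t := tsum_congr hwNval
    _ ≤ ∑' k : ℕ, (Pp * q ^ k) * ((k : ℝ≥0∞) * a 0) :=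
        ENNReal.tsum_le_tsum fun k => mul_le_mul_right (hck k) _
    _ = ∑' k : ℕ, Pp * (((k : ℝ≥0∞) * q ^ k) * a 0) := tsum_congr fun k => by ring
    _ = Pp * ((∑' k : ℕ, (k : ℝ≥0∞) * q ^ k) * a 0) := by
        rw [ENNReal.tsum_mul_left, ENNReal.tsum_mul_right]
    _ = ENNReal.ofReal (p * ((1 - p) / p ^ 2)) * a 0 := by
        rw [hsum, hPp, ← mul_assoc, ← ENNReal.ofReal_mul hp0.le]

end
end

section
/- For all integers m ≥ 1 and n ≥ 1, the probability that the m-th head occurs after the n-th tail equals (1−p)^n · Σ_{i=0}^{m−1} C(n−1+i, i) · p^i. Precisely: ℙ{ω : i_false(n)(ω) < i_true(m)(ω)} = (1−p)^n · Σ_{i=0}^{m−1} (Nat.choose (n−1+i) i) · p^i, where the comparison is in ℕ∞. -/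
open MeasureTheory ENNReal
open scoped Classical

noncomputable section

/-- The number of indices `t < n` with `ω t = b`. -/
def countOf (b : Bool) (ω : ℕ → Bool) (n : ℕ) : ℕ :=
  ((Finset.range n).filter fun t => ω t = b).card

/-- `i_b(k)(ω)`: the least `T : ℕ` such that exactly `k` of `ω 0, …, ω (T-1)` equal `b`
(`∞` if no such `T` exists). -/
def idx (b : Bool) (k : ℕ) (ω : ℕ → Bool) : ℕ∞ :=
  sInf {T : ℕ∞ | ∃ n : ℕ, T = (n : ℕ∞) ∧ countOf b ω n = k}

lemma countOf_le (b : Bool) (ω : ℕ → Bool) (t : ℕ) : countOf b ω t ≤ t := by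
  simpa [countOf] using Finset.card_filter_le (Finset.range t) (fun x => ω x = b)

lemma countOf_mono (b : Bool) (ω : ℕ → Bool) {s t : ℕ} (h : s ≤ t) :
    countOf b ω s ≤ countOf b ω t :=
  Finset.card_le_card (Finset.filter_subset_filter _ (Finset.range_subset_range.2 h))

lemma countOf_succ (b : Bool) (ω : ℕ → Bool) (t : ℕ) :
    countOf b ω (t+1) = countOf b ω t + if ω t = b then 1 else 0 := by
  unfold countOf
  rw [Finset.range_add_one, Finset.filter_insert]
  by_cases h : ω t = b
  · rw [if_pos h, Finset.card_insert_of_notMem (by simp), if_pos h]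
  · rw [if_neg h, if_neg h, Nat.add_zero]

lemma countOf_true_add_false (ω : ℕ → Bool) (t : ℕ) :
    countOf true ω t + countOf false ω t = t := by
  induction t with
  | zero => simp [countOf]
  | succ t ih =>
    rw [countOf_succ, countOf_succ]
    cases h : ω t <;> simp [h] <;> omega

lemma exists_countOf_eq {b : Bool} {ω : ℕ → Bool} {k T : ℕ} (h : k ≤ countOf b ω T) :
    ∃ t ≤ T, countOf b ω t = k := by
  induction T with
  | zero =>
    refine ⟨0, le_rfl, ?_⟩
    simp [countOf] at h ⊢
    omega
  | succ T ih =>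
    by_cases h' : k ≤ countOf b ω T
    · obtain ⟨t, ht, hc⟩ := ih h'
      exact ⟨t, ht.trans (Nat.le_succ T), hc⟩
    · push_neg at h'
      refine ⟨T+1, le_rfl, ?_⟩
      rw [countOf_succ] at h ⊢
      by_cases hb : ω T = b <;> simp [hb] at h ⊢ <;> omega

lemma idx_le_iff {b : Bool} {k : ℕ} {ω : ℕ → Bool} (T : ℕ) :
    idx b k ω ≤ (T : ℕ∞) ↔ k ≤ countOf b ω T := by
  constructor
  · intro h
    by_contra hc
    push_neg at hc
    have hge : (T : ℕ∞) + 1 ≤ idx b k ω := by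
      apply le_sInf
      rintro x ⟨t, rfl, ht⟩
      have hTt : T < t := by
        by_contra h2
        push_neg at h2
        have := countOf_mono b ω h2
        omega
      exact_mod_cast Nat.succ_le_of_lt hTt
    have h2 : (T:ℕ∞) < (T:ℕ∞)+1 := by
      exact_mod_cast Nat.lt_succ_self T
    exact absurd (h.trans_lt (lt_of_lt_of_le h2 hge)) (lt_irrefl _)
  · intro h
    obtain ⟨t, ht, hc⟩ := exists_countOf_eq h
    calc idx b k ω ≤ (t:ℕ∞) := sInf_le ⟨t, rfl, hc⟩
    _ ≤ (T:ℕ∞) := by exact_mod_cast ht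

lemma event_eq (m n : ℕ) (hm : 1 ≤ m) (hn : 1 ≤ n) :
    {ω : ℕ → Bool | idx false n ω < idx true m ω}
      = {ω : ℕ → Bool | n ≤ countOf false ω (n + m - 1)} := by
  ext ω
  simp only [Set.mem_setOf_eq]
  constructor
  · intro h
    by_contra hc
    push_neg at hc
    have hsum := countOf_true_add_false ω (n+m-1)
    have hm' : m ≤ countOf true ω (n+m-1) := by omega
    obtain ⟨t, ht, hct⟩ := exists_countOf_eq hm'
    have h1 : idx true m ω ≤ (t:ℕ∞) := (idx_le_iff t).2 (le_of_eq hct.symm)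
    have h2 : ¬ idx false n ω ≤ (t:ℕ∞) := by
      rw [idx_le_iff]
      have := countOf_mono false ω ht
      omega
    exact lt_asymm h (h1.trans_lt (not_le.1 h2))
  · intro h
    obtain ⟨t, ht, hct⟩ := exists_countOf_eq h
    have h1 : idx false n ω ≤ (t:ℕ∞) := (idx_le_iff t).2 (le_of_eq hct.symm)
    have h2 : ¬ idx true m ω ≤ (t:ℕ∞) := by
      rw [idx_le_iff]
      have hsum := countOf_true_add_false ω t
      omega
    exact h1.trans_lt (not_le.1 h2)

lemma step_lemma (p q : ℝ) (h : p + q = 1) (a m : ℕ) :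
    ∑ k ∈ Finset.range (m+1), (Nat.choose (a+m+1) k : ℝ) * (p ^ k * q ^ (a+m+1-k))
      = (∑ k ∈ Finset.range m, (Nat.choose (a+m) k : ℝ) * (p ^ k * q ^ (a+m-k)))
        + (Nat.choose (a+m) m : ℝ) * (p ^ m * q ^ (a+1)) := by
  have e1 : ∑ k ∈ Finset.range (m+1), (Nat.choose (a+m) k : ℝ) * (p ^ k * q ^ (a+m-k))
      = (∑ i ∈ Finset.range m, (Nat.choose (a+m) (i+1) : ℝ) * (p ^ (i+1) * q ^ (a+m-(i+1))))
        + q ^ (a+m) := by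
    rw [Finset.sum_range_succ']
    norm_num
  have e2 : ∑ k ∈ Finset.range (m+1), (Nat.choose (a+m) k : ℝ) * (p ^ k * q ^ (a+m-k))
      = (∑ k ∈ Finset.range m, (Nat.choose (a+m) k : ℝ) * (p ^ k * q ^ (a+m-k)))
        + (Nat.choose (a+m) m : ℝ) * (p^m * q^a) := by
    rw [Finset.sum_range_succ]
    norm_num
  rw [Finset.sum_range_succ']
  have e3 : ∀ i ∈ Finset.range m,
      (Nat.choose (a+m+1) (i+1) : ℝ) * (p ^ (i+1) * q ^ (a+m+1-(i+1)))
      = p * ((Nat.choose (a+m) i : ℝ) * (p ^ i * q ^ (a+m-i)))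
        + q * ((Nat.choose (a+m) (i+1) : ℝ) * (p ^ (i+1) * q ^ (a+m-(i+1)))) := by
    intro i hi
    have hi' : i < m := Finset.mem_range.1 hi
    rw [show a+m+1-(i+1) = a+m-(i+1)+1 by omega, Nat.choose_succ_succ]
    rw [show a+m-i = a+m-(i+1)+1 by omega]
    push_cast
    ring
  rw [Finset.sum_congr rfl e3, Finset.sum_add_distrib, ← Finset.mul_sum, ← Finset.mul_sum]
  have hU : (∑ i ∈ Finset.range m, (Nat.choose (a+m) (i+1) : ℝ) * (p ^ (i+1) * q ^ (a+m-(i+1))))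
      = (∑ k ∈ Finset.range m, (Nat.choose (a+m) k : ℝ) * (p ^ k * q ^ (a+m-k)))
        + (Nat.choose (a+m) m : ℝ) * (p^m * q^a) - q^(a+m) := by
    rw [e2] at e1
    linarith
  rw [hU]
  simp only [Nat.choose_zero_right, Nat.cast_one, pow_zero, Nat.sub_zero, one_mul]
  linear_combination (∑ k ∈ Finset.range m, (Nat.choose (a+m) k : ℝ) * (p ^ k * q ^ (a+m-k))) * h

lemma key_lemma (p q : ℝ) (h : p + q = 1) (a : ℕ) (m : ℕ) :
    ∑ k ∈ Finset.range m, (Nat.choose (a+m) k : ℝ) * (p ^ k * q ^ (a+m-k))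
      = q ^ (a+1) * ∑ i ∈ Finset.range m, (Nat.choose (a+i) i : ℝ) * p ^ i := by
  induction m with
  | zero => simp
  | succ m ih =>
    rw [show a+(m+1) = a+m+1 by omega]
    rw [step_lemma p q h a m, ih, Finset.sum_range_succ]
    ring

lemma cyl_meas (t : Finset ℕ) (b : ℕ → Bool) :
    MeasurableSet {ω : ℕ → Bool | ∀ i ∈ t, ω i = b i} := by
  have : {ω : ℕ → Bool | ∀ i ∈ t, ω i = b i}
      = ⋂ i ∈ (t : Set ℕ), (fun ω : ℕ → Bool => ω i) ⁻¹' {b i} := by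
    ext ω; simp
  rw [this]
  exact MeasurableSet.biInter t.countable_toSet
    (fun i _ => (measurable_pi_apply i) (measurableSet_singleton _))

/-- `G_p(m,n) = (1-p)^n Σ_{i=0}^{m-1} C(n-1+i, i) p^i`. -/
theorem prob_mth_head_after_nth_tail
    (p : ℝ) (hp0 : 0 < p) (hp1 : p < 1)
    (P : Measure (ℕ → Bool)) [IsProbabilityMeasure P] (hP : IsBernoulliProduct p P)
    (m n : ℕ) (hm : 1 ≤ m) (hn : 1 ≤ n) :
    P {ω | idx false n ω < idx true m ω} =
      ENNReal.ofReal
        ((1 - p) ^ n * ∑ i ∈ Finset.range m, (Nat.choose (n - 1 + i) i : ℝ) * p ^ i) := by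
  have hp0' : (0:ℝ) ≤ p := le_of_lt hp0
  have hq0 : (0:ℝ) ≤ 1 - p := by linarith
  rw [event_eq m n hm hn]
  set N := n + m - 1 with hN
  set S : Finset (Finset ℕ) := (Finset.range N).powerset.filter (fun s => s.card ≤ m - 1)
    with hSdef
  -- the event as a finite disjoint union of cylinders
  have hunion : {ω : ℕ → Bool | n ≤ countOf false ω N}
      = ⋃ s ∈ S, {ω : ℕ → Bool | ∀ i ∈ Finset.range N, ω i = decide (i ∈ s)} := by
    ext ω
    simp only [Set.mem_setOf_eq, Set.mem_iUnion, exists_prop]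
    constructor
    · intro h
      refine ⟨(Finset.range N).filter (fun i => ω i = true), ?_, ?_⟩
      · rw [hSdef, Finset.mem_filter, Finset.mem_powerset]
        refine ⟨Finset.filter_subset _ _, ?_⟩
        have h1 : ((Finset.range N).filter (fun i => ω i = true)).card
            + countOf false ω N = N := countOf_true_add_false ω N
        have h2 := countOf_le false ω N
        omega
      · intro i hi
        cases hωi : ω i <;> simp [Finset.mem_filter, hi, hωi]
    · rintro ⟨s, hs, hω⟩
      rw [hSdef, Finset.mem_filter, Finset.mem_powerset] at hs
      obtain ⟨hsub, hcard⟩ := hs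
      have hcount : countOf false ω N = N - s.card := by
        rw [countOf]
        have heq : (Finset.range N).filter (fun t => ω t = false)
            = Finset.range N \ s := by
          ext i
          simp only [Finset.mem_filter, Finset.mem_sdiff]
          constructor
          · rintro ⟨h1, h2⟩
            refine ⟨h1, fun hmem => ?_⟩
            have := hω i h1
            rw [h2] at this
            simp [hmem] at this
          · rintro ⟨h1, h2⟩
            refine ⟨h1, ?_⟩
            have := hω i h1
            simpa [h2] using this
        rw [heq, Finset.card_sdiff_of_subset hsub, Finset.card_range]
      have hcards : s.card ≤ N := by
        have := Finset.card_le_card hsub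
        simpa using this
      omega
  rw [hunion]
  have hdisj : (S : Set (Finset ℕ)).PairwiseDisjoint
      (fun s => {ω : ℕ → Bool | ∀ i ∈ Finset.range N, ω i = decide (i ∈ s)}) := by
    intro s hs s' hs' hne
    refine Set.disjoint_left.2 fun ω h1 h2 => hne ?_
    have hsub : s ⊆ Finset.range N := by
      have := Finset.mem_coe.1 hs
      rw [hSdef, Finset.mem_filter, Finset.mem_powerset] at this
      exact this.1
    have hsub' : s' ⊆ Finset.range N := by
      have := Finset.mem_coe.1 hs'
      rw [hSdef, Finset.mem_filter, Finset.mem_powerset] at this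
      exact this.1
    ext i
    by_cases hi : i ∈ Finset.range N
    · have e1 := h1 i hi
      have e2 := h2 i hi
      rw [e1] at e2
      exact decide_eq_decide.mp e2
    · constructor <;> intro hh
      · exact absurd (hsub hh) hi
      · exact absurd (hsub' hh) hi
  rw [measure_biUnion_finset hdisj (fun s _ => cyl_meas _ _)]
  -- compute the measure of each cylinder
  have hPs : ∀ s ∈ S, P {ω : ℕ → Bool | ∀ i ∈ Finset.range N, ω i = decide (i ∈ s)}
      = ENNReal.ofReal p ^ s.card * ENNReal.ofReal (1-p) ^ (N - s.card) := by
    intro s hs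
    rw [hSdef, Finset.mem_filter, Finset.mem_powerset] at hs
    obtain ⟨hsub, hcard⟩ := hs
    rw [hP (Finset.range N) (fun i => decide (i ∈ s))]
    have hcongr : ∀ i ∈ Finset.range N,
        (if (decide (i ∈ s) : Bool) then ENNReal.ofReal p else ENNReal.ofReal (1-p))
        = (if i ∈ s then ENNReal.ofReal p else ENNReal.ofReal (1-p)) := by
      intro i _
      by_cases h : i ∈ s <;> simp [h]
    rw [Finset.prod_congr rfl hcongr, Finset.prod_ite, Finset.prod_const, Finset.prod_const]
    congr 2
    · rw [Finset.filter_mem_eq_inter, Finset.inter_eq_right.2 hsub]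
    · rw [Finset.filter_not, Finset.filter_mem_eq_inter, Finset.inter_eq_right.2 hsub,
        Finset.card_sdiff_of_subset hsub, Finset.card_range]
  rw [Finset.sum_congr rfl hPs]
  -- group by cardinality
  have hSb : S = (Finset.range m).biUnion (fun k => (Finset.range N).powersetCard k) := by
    ext s
    simp only [hSdef, Finset.mem_filter, Finset.mem_powerset, Finset.mem_biUnion,
      Finset.mem_range, Finset.mem_powersetCard]
    constructor
    · rintro ⟨h1, h2⟩
      exact ⟨s.card, by omega, h1, rfl⟩
    · rintro ⟨k, hk, h1, h2⟩
      exact ⟨h1, by omega⟩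
  rw [hSb, Finset.sum_biUnion (by
    intro k hk l hl hkl
    refine Finset.disjoint_left.2 fun s h1 h2 => hkl ?_
    rw [← (Finset.mem_powersetCard.1 h1).2, ← (Finset.mem_powersetCard.1 h2).2])]
  have hinner : ∀ k ∈ Finset.range m,
      ∑ s ∈ (Finset.range N).powersetCard k,
        (ENNReal.ofReal p ^ s.card * ENNReal.ofReal (1-p) ^ (N - s.card))
      = ENNReal.ofReal ((Nat.choose N k : ℝ) * (p ^ k * (1-p) ^ (N-k))) := by
    intro k _
    rw [Finset.sum_congr rfl (fun s hs => by
      rw [(Finset.mem_powersetCard.1 hs).2])]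
    rw [Finset.sum_const, Finset.card_powersetCard, Finset.card_range, nsmul_eq_mul,
      ← ENNReal.ofReal_pow hp0', ← ENNReal.ofReal_pow hq0,
      ← ENNReal.ofReal_mul (by positivity), ← ENNReal.ofReal_natCast,
      ← ENNReal.ofReal_mul (by positivity)]
  rw [Finset.sum_congr rfl hinner,
    ← ENNReal.ofReal_sum_of_nonneg (fun k _ => by positivity)]
  congr 1
  obtain ⟨a, rfl⟩ : ∃ a, n = a + 1 := ⟨n - 1, by omega⟩
  have hNa : N = a + m := by omega
  rw [hNa]
  simp only [Nat.add_sub_cancel]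
  exact key_lemma p (1-p) (by ring) a m

end
end

section
/- For every real number p with 0 < p < 1 and (1−p)(1+p)² < 1, Σ_{n=1}^{∞} ℙ{ω : i_false(n)(ω) < i_true(n)(ω)} ≤ (1−p) / (1 − (1−p)(1+p)²), i.e., the sum over n ≥ 1 of the probabilities that the n-th head occurs after the n-th tail is at most (1−p)/(1−(1−p)(1+p)²). -/
open MeasureTheory ENNReal
open scoped Classical

noncomputable section

namespace SumGnnAux

lemma countOf_zero (b : Bool) (ω : ℕ → Bool) : countOf b ω 0 = 0 := by simp [countOf]

lemma countOf_succ (b : Bool) (ω : ℕ → Bool) (n : ℕ) :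
    countOf b ω (n + 1) = countOf b ω n + if ω n = b then 1 else 0 := by
  unfold countOf
  rw [Finset.range_add_one, Finset.filter_insert]
  split
  · rw [Finset.card_insert_of_notMem (by simp)]
  · simp

lemma countOf_add_countOf (ω : ℕ → Bool) (n : ℕ) :
    countOf true ω n + countOf false ω n = n := by
  induction n with
  | zero => simp [countOf_zero]
  | succ m ih =>
      rw [countOf_succ, countOf_succ]
      cases h : ω m <;> simp [h] <;> omega

lemma exists_countOf_eq (b : Bool) (ω : ℕ → Bool) {k m : ℕ} (hk : k ≤ countOf b ω m) :
    ∃ j ≤ m, countOf b ω j = k := by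
  induction m with
  | zero =>
      refine ⟨0, le_rfl, ?_⟩
      rw [countOf_zero] at hk ⊢
      omega
  | succ m ih =>
      by_cases h : k ≤ countOf b ω m
      · obtain ⟨j, hj, hj2⟩ := ih h
        exact ⟨j, hj.trans (Nat.le_succ m), hj2⟩
      · refine ⟨m + 1, le_rfl, ?_⟩
        have h2 := countOf_succ b ω m
        have h3 : countOf b ω (m + 1) ≤ countOf b ω m + 1 := by
          rw [h2]; split <;> omega
        omega

lemma idx_le {b : Bool} {k : ℕ} {ω : ℕ → Bool} {n : ℕ} (h : countOf b ω n = k) :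
    idx b k ω ≤ (n : ℕ∞) := sInf_le ⟨n, rfl, h⟩

lemma le_idx {b : Bool} {k : ℕ} {ω : ℕ → Bool} {T : ℕ}
    (h : ∀ m, countOf b ω m = k → T ≤ m) : (T : ℕ∞) ≤ idx b k ω := by
  apply le_sInf
  rintro x ⟨n, rfl, hn⟩
  exact_mod_cast h n hn

lemma idx_eq_top {b : Bool} {k : ℕ} {ω : ℕ → Bool} (h : ∀ n, countOf b ω n ≠ k) :
    idx b k ω = ⊤ :=
  sInf_eq_top.2 (by rintro x ⟨n, rfl, hn⟩; exact absurd hn (h n))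

lemma event_subset (k : ℕ) (hk : 0 < k) :
    {ω : ℕ → Bool | idx false k ω < idx true k ω} ⊆
      ⋃ h ∈ Finset.range k, ⋃ S ∈ (Finset.range (k + h - 1)).powersetCard h,
        {ω : ℕ → Bool | ∀ i ∈ Finset.range (k + h), ω i = decide (i ∈ S)} := by
  intro ω hω
  simp only [Set.mem_setOf_eq] at hω
  have hex : ∃ n, countOf false ω n = k := by
    by_contra hc
    push_neg at hc
    rw [idx_eq_top hc] at hω
    exact absurd hω not_top_lt
  have hT : countOf false ω (Nat.find hex) = k := Nat.find_spec hex
  have hmin : ∀ m, countOf false ω m = k → Nat.find hex ≤ m := fun m hm => Nat.find_min' hex hm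
  have hidxf : idx false k ω = (Nat.find hex : ℕ∞) := le_antisymm (idx_le hT) (le_idx hmin)
  have hT0 : Nat.find hex ≠ 0 := by
    intro h0
    rw [h0, countOf_zero] at hT
    omega
  obtain ⟨T', hT'⟩ : ∃ T', Nat.find hex = T' + 1 := ⟨Nat.find hex - 1, by omega⟩
  rw [hT'] at hT hidxf
  have hmin' : ∀ m, countOf false ω m = k → T' + 1 ≤ m := by
    intro m hm; have := hmin m hm; omega
  have hstep := countOf_succ false ω T'
  have hωT' : ω T' = false := by
    by_contra hcase
    rw [hstep, if_neg hcase, add_zero] at hT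
    have := hmin' T' hT
    omega
  have hcT' : countOf false ω T' = k - 1 := by
    rw [hstep, if_pos hωT'] at hT
    omega
  set h := countOf true ω T' with hh
  have hsum : h + (k - 1) = T' := by
    have := countOf_add_countOf ω T'
    omega
  have hhk : h < k := by
    by_contra hge
    push_neg at hge
    obtain ⟨j, hj, hj2⟩ := exists_countOf_eq true ω hge
    have h1 : idx true k ω ≤ (j : ℕ∞) := idx_le hj2
    have h2 : ((T' + 1 : ℕ) : ℕ∞) < (j : ℕ∞) := lt_of_lt_of_le (hidxf ▸ hω) h1
    have h3 : T' + 1 < j := by exact_mod_cast h2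
    omega
  set S := (Finset.range T').filter (fun t => ω t = true) with hS
  have hScard : S.card = h := rfl
  refine Set.mem_iUnion₂.2 ⟨h, Finset.mem_range.2 hhk, Set.mem_iUnion₂.2 ⟨S, ?_, ?_⟩⟩
  · rw [Finset.mem_powersetCard]
    refine ⟨?_, hScard⟩
    intro x hx
    have hx1 := Finset.mem_filter.1 hx
    rw [Finset.mem_range] at hx1 ⊢
    omega
  · intro i hi
    rw [Finset.mem_range] at hi
    have hi' : i < T' ∨ i = T' := by omega
    rcases hi' with hi' | rfl
    · by_cases hωi : ω i = true
      · have hmem : i ∈ S := Finset.mem_filter.2 ⟨Finset.mem_range.2 hi', hωi⟩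
        simp [hmem, hωi]
      · have hmem : i ∉ S := fun hc => hωi (Finset.mem_filter.1 hc).2
        simp only [hmem, decide_eq_false hmem]
        cases hb : ω i
        · rfl
        · exact absurd hb hωi
    · have hmem : i ∉ S := by
        intro hc
        exact absurd (Finset.mem_filter.1 hc).1 (by simp)
      rw [decide_eq_false hmem]
      exact hωT'

lemma cylinder_measure {p : ℝ} {P : Measure (ℕ → Bool)}
    (hP : IsBernoulliProduct p P) (m : ℕ) (S : Finset ℕ) (hS : S ⊆ Finset.range m) :
    P {ω : ℕ → Bool | ∀ i ∈ Finset.range m, ω i = decide (i ∈ S)} =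
      ENNReal.ofReal p ^ S.card * ENNReal.ofReal (1 - p) ^ (m - S.card) := by
  rw [hP (Finset.range m) (fun i => decide (i ∈ S))]
  have key : ∀ i, (if (decide (i ∈ S) : Bool) then ENNReal.ofReal p else ENNReal.ofReal (1 - p))
      = if i ∈ S then ENNReal.ofReal p else ENNReal.ofReal (1 - p) := by
    intro i
    by_cases h : i ∈ S <;> simp [h]
  simp only [key]
  rw [← Finset.union_sdiff_of_subset hS, Finset.prod_union Finset.sdiff_disjoint.symm,
    Finset.prod_congr rfl (fun x hx => if_pos hx),
    Finset.prod_congr rfl (fun x (hx : x ∈ Finset.range m \ S) =>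
      if_neg (Finset.mem_sdiff.1 hx).2),
    Finset.prod_const, Finset.prod_const, Finset.card_sdiff_of_subset hS, Finset.card_range]

lemma prob_event_le {p : ℝ} {P : Measure (ℕ → Bool)}
    (hP : IsBernoulliProduct p P) (k : ℕ) (hk : 0 < k) :
    P {ω : ℕ → Bool | idx false k ω < idx true k ω} ≤
      ENNReal.ofReal (1 - p) ^ k * (1 + ENNReal.ofReal p) ^ (2 * (k - 1)) := by
  set p' := ENNReal.ofReal p with hp'
  set q' := ENNReal.ofReal (1 - p) with hq'
  calc P {ω : ℕ → Bool | idx false k ω < idx true k ω}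
      ≤ P (⋃ h ∈ Finset.range k, ⋃ S ∈ (Finset.range (k + h - 1)).powersetCard h,
          {ω : ℕ → Bool | ∀ i ∈ Finset.range (k + h), ω i = decide (i ∈ S)}) :=
        measure_mono (event_subset k hk)
    _ ≤ ∑ h ∈ Finset.range k, P (⋃ S ∈ (Finset.range (k + h - 1)).powersetCard h,
          {ω : ℕ → Bool | ∀ i ∈ Finset.range (k + h), ω i = decide (i ∈ S)}) :=
        measure_biUnion_finset_le _ _
    _ ≤ ∑ h ∈ Finset.range k, ∑ S ∈ (Finset.range (k + h - 1)).powersetCard h,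
          P {ω : ℕ → Bool | ∀ i ∈ Finset.range (k + h), ω i = decide (i ∈ S)} :=
        Finset.sum_le_sum fun h _ => measure_biUnion_finset_le _ _
    _ = ∑ h ∈ Finset.range k, ((k + h - 1).choose h : ℝ≥0∞) * (p' ^ h * q' ^ k) := by
        apply Finset.sum_congr rfl
        intro h hh
        rw [Finset.mem_range] at hh
        have hsum : ∀ S ∈ (Finset.range (k + h - 1)).powersetCard h,
            P {ω : ℕ → Bool | ∀ i ∈ Finset.range (k + h), ω i = decide (i ∈ S)}
              = p' ^ h * q' ^ k := by
          intro S hSmem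
          rw [Finset.mem_powersetCard] at hSmem
          have hsub : S ⊆ Finset.range (k + h) := by
            intro x hx
            have := Finset.mem_range.1 (hSmem.1 hx)
            rw [Finset.mem_range]
            omega
          rw [cylinder_measure hP (k + h) S hsub, hSmem.2,
            show k + h - h = k by omega]
        rw [Finset.sum_congr rfl hsum, Finset.sum_const, Finset.card_powersetCard,
          Finset.card_range, nsmul_eq_mul]
    _ ≤ ∑ h ∈ Finset.range k, ((2 * (k - 1)).choose h : ℝ≥0∞) * (p' ^ h * q' ^ k) := by
        apply Finset.sum_le_sum
        intro h hh
        rw [Finset.mem_range] at hh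
        have : (k + h - 1).choose h ≤ (2 * (k - 1)).choose h :=
          Nat.choose_le_choose h (by omega)
        exact mul_le_mul_left (by exact_mod_cast Nat.cast_le.2 this) _
    _ = q' ^ k * ∑ h ∈ Finset.range k, p' ^ h * ((2 * (k - 1)).choose h : ℝ≥0∞) := by
        rw [Finset.mul_sum]
        apply Finset.sum_congr rfl
        intro h _
        ring
    _ ≤ q' ^ k * ∑ h ∈ Finset.range (2 * (k - 1) + 1), p' ^ h * ((2 * (k - 1)).choose h : ℝ≥0∞) := by
        apply mul_le_mul_right
        apply Finset.sum_le_sum_of_subset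
        intro x hx
        rw [Finset.mem_range] at hx ⊢
        omega
    _ = q' ^ k * (p' + 1) ^ (2 * (k - 1)) := by
        rw [add_pow]
        simp
    _ = q' ^ k * (1 + p') ^ (2 * (k - 1)) := by rw [add_comm]

end SumGnnAux

open SumGnnAux in
/-- `Σ_{n ≥ 1} G_p(n,n) ≤ (1-p)/(1-(1-p)(1+p)²)`. -/
theorem sum_Gnn_le
    (p : ℝ) (hp0 : 0 < p) (hp1 : p < 1) (hr : (1 - p) * (1 + p) ^ 2 < 1)
    (P : Measure (ℕ → Bool)) [IsProbabilityMeasure P] (hP : IsBernoulliProduct p P) :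
    ∑' n : ℕ, P {ω | idx false (n + 1) ω < idx true (n + 1) ω} ≤
      ENNReal.ofReal ((1 - p) / (1 - (1 - p) * (1 + p) ^ 2)) := by
  set p' := ENNReal.ofReal p with hp'
  set q' := ENNReal.ofReal (1 - p) with hq'
  set r : ℝ := (1 - p) * (1 + p) ^ 2 with hrdef
  have hq0 : (0:ℝ) ≤ 1 - p := by linarith
  have hr0 : (0:ℝ) ≤ r := by positivity
  have h1p : (1:ℝ≥0∞) + p' = ENNReal.ofReal (1 + p) := by
    rw [ENNReal.ofReal_add (by norm_num) hp0.le, ENNReal.ofReal_one]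
  have har : q' * (1 + p') ^ 2 = ENNReal.ofReal r := by
    rw [h1p, hrdef, ENNReal.ofReal_mul hq0, ENNReal.ofReal_pow (by linarith)]
  have hstep : ∀ n : ℕ, P {ω | idx false (n + 1) ω < idx true (n + 1) ω}
      ≤ q' * (ENNReal.ofReal r) ^ n := by
    intro n
    have := prob_event_le hP (n + 1) (Nat.succ_pos n)
    rw [← hq', ← hp'] at this
    refine this.trans_eq ?_
    rw [← har]
    simp only [Nat.add_sub_cancel]
    rw [mul_pow, pow_mul]
    ring
  calc ∑' n : ℕ, P {ω | idx false (n + 1) ω < idx true (n + 1) ω}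
      ≤ ∑' n : ℕ, q' * (ENNReal.ofReal r) ^ n := ENNReal.tsum_le_tsum hstep
    _ = q' * (1 - ENNReal.ofReal r)⁻¹ := by
        rw [ENNReal.tsum_mul_left, ENNReal.tsum_geometric]
    _ = ENNReal.ofReal ((1 - p) / (1 - r)) := by
        have h1 : (1:ℝ≥0∞) - ENNReal.ofReal r = ENNReal.ofReal (1 - r) := by
          rw [ENNReal.ofReal_sub 1 hr0, ENNReal.ofReal_one]
        rw [h1, ← ENNReal.ofReal_inv_of_pos (by linarith), ← ENNReal.ofReal_mul hq0,
          div_eq_mul_inv]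

end
end
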